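/- If a set S ⊆ ℤ^n is integrally convex, then its convex hull conv(S) is a box-integer polyhedron and S = conv(S) ∩ ℤ^n. -/
import Mathlib


open Set Pointwise

noncomputable section

/-- Embedding of integer vectors into real vectors. -/
def coeZ {n : ℕ} (z : Fin n → ℤ) : Fin n → ℝ := fun i => (z i : ℝ)

/-- A (nonempty) polyhedron: solution set of a finite system of linear inequalities. -/
def IsPolyhedron {n : ℕ} (P : Set (Fin n → ℝ)) : Prop :=
  P.Nonempty ∧ ∃ (m : ℕ) (A : Matrix (Fin m) (Fin n) ℝ) (b : Fin m → ℝ),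
    P = {x | A.mulVec x ≤ b}

/-- The integer points of a set `P ⊆ ℝ^n`. -/
def intPts {n : ℕ} (P : Set (Fin n → ℝ)) : Set (Fin n → ℝ) :=
  {x ∈ P | ∀ i, ∃ z : ℤ, x i = (z : ℝ)}

/-- The box `{x : l ≤ x ≤ u}` with integral bounds. -/
def intBox {n : ℕ} (l u : Fin n → ℤ) : Set (Fin n → ℝ) :=
  {x | ∀ i, (l i : ℝ) ≤ x i ∧ x i ≤ (u i : ℝ)}

/-- A set `P ⊆ ℝ^n` is box-integer if its intersection with every integral box,
whenever nonempty, equals the convex hull of its integer points. -/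
def IsBoxInteger {n : ℕ} (P : Set (Fin n → ℝ)) : Prop :=
  ∀ l u : Fin n → ℤ, l ≤ u → (P ∩ intBox l u).Nonempty →
    P ∩ intBox l u = convexHull ℝ (intPts (P ∩ intBox l u))

/-- A set closed under multiplication by nonnegative scalars. -/
def IsConeSet {n : ℕ} (C : Set (Fin n → ℝ)) : Prop :=
  ∀ x ∈ C, ∀ lam : ℝ, 0 ≤ lam → lam • x ∈ C

/-- The characteristic (recession) cone of `P`. -/
def charCone {n : ℕ} (P : Set (Fin n → ℝ)) : Set (Fin n → ℝ) :=
  {d | ∀ x ∈ P, x + d ∈ P}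

/-- The integral neighborhood `N(x)` of a real vector `x`. -/
def intNbhd {n : ℕ} (x : Fin n → ℝ) : Set (Fin n → ℤ) :=
  {z | ∀ i, |x i - (z i : ℝ)| < 1}

/-- The convex hull (in `ℝ^n`) of a set of integer vectors. -/
def convZ {n : ℕ} (S : Set (Fin n → ℤ)) : Set (Fin n → ℝ) :=
  convexHull ℝ (coeZ '' S)

/-- A nonempty set `S ⊆ ℤ^n` is integrally convex if every point `x` of its convex hull
belongs to the convex hull of `S ∩ N(x)`. -/
def IntegrallyConvex {n : ℕ} (S : Set (Fin n → ℤ)) : Prop :=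
  S.Nonempty ∧ ∀ x ∈ convZ S, x ∈ convZ (S ∩ intNbhd x)

/-- An L♮-convex polyhedron, given by its standard inequality description. -/
def IsLNatPolyhedron {n : ℕ} (P : Set (Fin n → ℝ)) : Prop :=
  P.Nonempty ∧ ∃ (I J : Set (Fin n)) (E : Set (Fin n × Fin n))
    (l u : Fin n → ℤ) (dd : Fin n × Fin n → ℤ),
    P = {x | (∀ i ∈ I, (l i : ℝ) ≤ x i) ∧ (∀ j ∈ J, x j ≤ (u j : ℝ)) ∧
             (∀ p ∈ E, x p.2 - x p.1 ≤ (dd p : ℝ))}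

/-- An L²♮-convex polyhedron: the Minkowski sum of two L♮-convex polyhedra. -/
def IsL2NatPolyhedron {n : ℕ} (P : Set (Fin n → ℝ)) : Prop :=
  ∃ P₁ P₂ : Set (Fin n → ℝ), IsLNatPolyhedron P₁ ∧ IsLNatPolyhedron P₂ ∧ P = P₁ + P₂

/-- An M♮-convex set of integer vectors (exchange axiom). -/
def IsMNatSet {n : ℕ} (S : Set (Fin n → ℤ)) : Prop :=
  S.Nonempty ∧ ∀ x ∈ S, ∀ y ∈ S, ∀ i : Fin n, y i < x i →
    ((x - Pi.single i 1 ∈ S ∧ y + Pi.single i 1 ∈ S) ∨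
     ∃ j : Fin n, x j < y j ∧ x - Pi.single i 1 + Pi.single j 1 ∈ S ∧
       y + Pi.single i 1 - Pi.single j 1 ∈ S)

/-- An M♮-convex polyhedron: the convex hull of an M♮-convex set. -/
def IsMNatPolyhedron {n : ℕ} (P : Set (Fin n → ℝ)) : Prop :=
  ∃ S : Set (Fin n → ℤ), IsMNatSet S ∧ P = convZ S

/-- An L♮-convex set of integer vectors (closed under componentwise
rounded-up and rounded-down midpoints). -/
def IsLNatSet {n : ℕ} (S : Set (Fin n → ℤ)) : Prop :=
  S.Nonempty ∧ ∀ x ∈ S, ∀ y ∈ S,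
    (fun i => ⌈(x i + y i : ℚ) / 2⌉) ∈ S ∧ (fun i => ⌊(x i + y i : ℚ) / 2⌋) ∈ S

/-- An L²♮-convex set: the Minkowski sum of two L♮-convex sets. -/
def IsL2NatSet {n : ℕ} (S : Set (Fin n → ℤ)) : Prop :=
  ∃ S₁ S₂ : Set (Fin n → ℤ), IsLNatSet S₁ ∧ IsLNatSet S₂ ∧ S = S₁ + S₂

namespace IcAux

open Matrix Finset

variable {n : ℕ}

lemma dot_sum {ι : Type*} (a : Fin n → ℝ) (F : Finset ι) (f : ι → Fin n → ℝ) :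
    a ⬝ᵥ (∑ x ∈ F, f x) = ∑ x ∈ F, a ⬝ᵥ f x := by
  classical
  induction F using Finset.induction_on with
  | empty => simp
  | @insert b G hb ih =>
      rw [Finset.sum_insert hb, Finset.sum_insert hb, dotProduct_add, ih]

lemma isLinearMap_dot (a : Fin n → ℝ) : IsLinearMap ℝ (fun v : Fin n → ℝ => a ⬝ᵥ v) :=
  ⟨fun x y => dotProduct_add a x y, fun c x => dotProduct_smul c a x⟩

/-- Membership in the convex cone generated by a finite set of vectors. -/
def coneComb (D : Finset (Fin n → ℝ)) (v : Fin n → ℝ) : Prop :=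
  ∃ c : (Fin n → ℝ) → ℝ, (∀ d, 0 ≤ c d) ∧ v = ∑ d ∈ D, c d • d

lemma coneComb_mem {D : Finset (Fin n → ℝ)} {d₀ : Fin n → ℝ} (h : d₀ ∈ D) :
    coneComb D d₀ := by
  classical
  refine ⟨fun x => if x = d₀ then 1 else 0, fun d => by dsimp only; split_ifs <;> norm_num, ?_⟩
  have hcong : ∀ d ∈ D, (if d = d₀ then (1:ℝ) else 0) • d = if d = d₀ then d else 0 := by
    intro d _; split_ifs <;> simp
  rw [Finset.sum_congr rfl hcong, Finset.sum_ite_eq' D d₀ (fun d => d), if_pos h]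

lemma coneComb_insert {D : Finset (Fin n → ℝ)} {d : Fin n → ℝ} (hd : d ∉ D)
    (v : Fin n → ℝ) :
    coneComb (insert d D) v ↔ ∃ t : ℝ, 0 ≤ t ∧ coneComb D (v - t • d) := by
  classical
  constructor
  · rintro ⟨c, hc, rfl⟩
    exact ⟨c d, hc d, c, hc, by rw [Finset.sum_insert hd]; abel⟩
  · rintro ⟨t, ht, c, hc, hv⟩
    refine ⟨fun x => if x = d then t else c x, fun x => ?_, ?_⟩
    · dsimp only; split_ifs; exacts [ht, hc x]
    · rw [Finset.sum_insert hd]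
      have hcong : ∀ x ∈ D, (if x = d then t else c x) • x = c x • x := by
        intro x hx
        rw [if_neg (by rintro rfl; exact hd hx)]
      show v = (if d = d then t else c d) • d + ∑ x ∈ D, (if x = d then t else c x) • x
      rw [if_pos rfl, Finset.sum_congr rfl hcong, ← hv]
      abel

theorem weyl_exists (D : Finset (Fin n → ℝ)) :
    ∃ A : Finset (Fin n → ℝ), ∀ v, coneComb D v ↔ ∀ a ∈ A, a ⬝ᵥ v ≤ 0 := by
  classical
  induction D using Finset.induction_on with
  | empty =>
    refine ⟨(Finset.univ.image fun i : Fin n => Pi.single i (1:ℝ)) ∪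
      (Finset.univ.image fun i : Fin n => Pi.single i (-1:ℝ)), fun v => ?_⟩
    constructor
    · rintro ⟨c, hc, rfl⟩
      intro a _
      simp
    · intro h
      refine ⟨fun _ => 0, fun _ => le_rfl, ?_⟩
      rw [Finset.sum_empty]
      funext i
      have h1 : Pi.single i (1:ℝ) ⬝ᵥ v ≤ 0 :=
        h _ (Finset.mem_union_left _ (Finset.mem_image_of_mem _ (Finset.mem_univ i)))
      have h2 : Pi.single i (-1:ℝ) ⬝ᵥ v ≤ 0 :=
        h _ (Finset.mem_union_right _ (Finset.mem_image_of_mem _ (Finset.mem_univ i)))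
      rw [single_dotProduct] at h1 h2
      show v i = 0
      nlinarith [h1, h2]
  | @insert d D hd ih =>
    obtain ⟨A', hA'⟩ := ih
    refine ⟨(A'.filter fun a => a ⬝ᵥ d ≤ 0) ∪
      ((A'.filter fun a => 0 < a ⬝ᵥ d) ×ˢ (A'.filter fun a => a ⬝ᵥ d < 0)).image
        (fun p => (p.1 ⬝ᵥ d) • p.2 - (p.2 ⬝ᵥ d) • p.1), fun v => ?_⟩
    rw [coneComb_insert hd]
    constructor
    · rintro ⟨t, ht, hcc⟩ a ha
      have h' := (hA' _).1 hcc
      rcases Finset.mem_union.1 ha with h1 | h2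
      · obtain ⟨haA, had⟩ := Finset.mem_filter.1 h1
        have hthis := h' a haA
        rw [dotProduct_sub, dotProduct_smul, smul_eq_mul] at hthis
        nlinarith
      · obtain ⟨p, hp, rfl⟩ := Finset.mem_image.1 h2
        obtain ⟨hp1, hp2⟩ := Finset.mem_product.1 hp
        obtain ⟨ha1, hd1⟩ := Finset.mem_filter.1 hp1
        obtain ⟨ha2, hd2⟩ := Finset.mem_filter.1 hp2
        have e1 := h' _ ha1
        have e2 := h' _ ha2
        rw [dotProduct_sub, dotProduct_smul, smul_eq_mul] at e1 e2
        have expand : ((p.1 ⬝ᵥ d) • p.2 - (p.2 ⬝ᵥ d) • p.1) ⬝ᵥ v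
            = (p.1 ⬝ᵥ d) * (p.2 ⬝ᵥ v) - (p.2 ⬝ᵥ d) * (p.1 ⬝ᵥ v) := by
          rw [sub_dotProduct, smul_dotProduct, smul_dotProduct, smul_eq_mul, smul_eq_mul]
        rw [expand]
        nlinarith
    · intro h
      obtain ⟨t, hmemt, hub⟩ : ∃ tt : ℝ, tt ∈ insert (0:ℝ) ((A'.filter fun a => 0 < a ⬝ᵥ d).image
            fun a => (a ⬝ᵥ v) / (a ⬝ᵥ d)) ∧
          ∀ r ∈ insert (0:ℝ) ((A'.filter fun a => 0 < a ⬝ᵥ d).image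
            fun a => (a ⬝ᵥ v) / (a ⬝ᵥ d)), r ≤ tt :=
        ⟨_, Finset.max'_mem _ (Finset.insert_nonempty _ _), fun r hr => Finset.le_max' _ r hr⟩
      have ht0 : (0:ℝ) ≤ t := hub 0 (Finset.mem_insert_self _ _)
      refine ⟨t, ht0, (hA' _).2 ?_⟩
      intro a haA'
      rw [dotProduct_sub, dotProduct_smul, smul_eq_mul]
      rcases lt_trichotomy (a ⬝ᵥ d) 0 with hneg | hzero | hpos
      · rcases Finset.mem_insert.1 hmemt with h0 | hratio
        · have hav : a ⬝ᵥ v ≤ 0 :=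
            h a (Finset.mem_union_left _ (Finset.mem_filter.2 ⟨haA', hneg.le⟩))
          rw [h0, zero_mul, sub_zero]
          exact hav
        · obtain ⟨a₀, ha₀P, hteq⟩ := Finset.mem_image.1 hratio
          obtain ⟨ha₀A, h₀pos⟩ := Finset.mem_filter.1 ha₀P
          have hcombo : ((a₀ ⬝ᵥ d) • a - (a ⬝ᵥ d) • a₀) ⬝ᵥ v ≤ 0 := by
            apply h
            refine Finset.mem_union_right _ (Finset.mem_image.2 ⟨(a₀, a), ?_, rfl⟩)
            exact Finset.mem_product.2
              ⟨Finset.mem_filter.2 ⟨ha₀A, h₀pos⟩, Finset.mem_filter.2 ⟨haA', hneg⟩⟩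
          rw [sub_dotProduct, smul_dotProduct, smul_dotProduct, smul_eq_mul,
            smul_eq_mul] at hcombo
          rw [← hteq, sub_nonpos, div_mul_eq_mul_div, le_div_iff₀ h₀pos]
          nlinarith [hcombo]
      · rw [hzero, mul_zero, sub_zero]
        exact h a (Finset.mem_union_left _ (Finset.mem_filter.2 ⟨haA', hzero.le⟩))
      · have hle : (a ⬝ᵥ v) / (a ⬝ᵥ d) ≤ t :=
          hub _ (Finset.mem_insert_of_mem
            (Finset.mem_image_of_mem _ (Finset.mem_filter.2 ⟨haA', hpos⟩)))
        rw [div_le_iff₀ hpos] at hle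
        linarith

end IcAux
namespace IcAux

open Matrix Finset

variable {n : ℕ}

/-! ### The gap function and rounding -/

noncomputable def gapR (x : ℝ) : ℝ :=
  if (⌊x⌋ : ℝ) = x then 1 else min (x - ⌊x⌋) (⌈x⌉ - x)

lemma gapR_pos (x : ℝ) : 0 < gapR x := by
  unfold gapR
  split_ifs with h
  · norm_num
  · have h1 : (⌊x⌋ : ℝ) < x := lt_of_le_of_ne (Int.floor_le x) h
    have h2 : x < (⌈x⌉ : ℝ) := by
      rcases lt_or_eq_of_le (Int.le_ceil x) with h' | h'
      · exact h'
      · exact absurd (by rw [h', Int.floor_intCast]) h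
    exact lt_min (by linarith) (by linarith)

lemma gapR_abs {x : ℝ} {z : ℤ} (h : |(z:ℝ) - x| < 1 + gapR x) : |(z:ℝ) - x| ≤ 1 := by
  unfold gapR at h
  rcases abs_lt.1 h with ⟨hlo, hhi⟩
  split_ifs at * with hint
  · -- x is an integer
    have hlo' : (⌊x⌋ : ℝ) - 2 < z := by linarith
    have hhi' : (z : ℝ) < (⌊x⌋ : ℝ) + 2 := by linarith
    have h1 : ⌊x⌋ - 2 < z := by exact_mod_cast hlo'
    have h2 : z < ⌊x⌋ + 2 := by exact_mod_cast hhi'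
    have h3 : ⌊x⌋ - 1 ≤ z := by omega
    have h4 : z ≤ ⌊x⌋ + 1 := by omega
    have h3' : (⌊x⌋ : ℝ) - 1 ≤ z := by exact_mod_cast h3
    have h4' : (z : ℝ) ≤ (⌊x⌋ : ℝ) + 1 := by exact_mod_cast h4
    rw [abs_le]
    constructor <;> linarith [hint.le, hint.ge]
  · have hfl : (⌊x⌋:ℝ) ≤ x := Int.floor_le x
    have hcl : x ≤ (⌈x⌉:ℝ) := Int.le_ceil x
    have hmin1 : min (x - ⌊x⌋) (⌈x⌉ - x) ≤ x - ⌊x⌋ := min_le_left _ _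
    have hmin2 : min (x - ⌊x⌋) (⌈x⌉ - x) ≤ (⌈x⌉:ℝ) - x := min_le_right _ _
    have hz1 : (z:ℝ) < (⌈x⌉:ℝ) + 1 := by linarith
    have hz2 : (⌊x⌋:ℝ) - 1 < z := by linarith
    have hz1' : z ≤ ⌈x⌉ := by
      have : z < ⌈x⌉ + 1 := by exact_mod_cast hz1
      omega
    have hz2' : ⌊x⌋ ≤ z := by
      have : ⌊x⌋ - 1 < z := by exact_mod_cast hz2
      omega
    have hz1'' : (z:ℝ) ≤ (⌈x⌉:ℝ) := by exact_mod_cast hz1'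
    have hz2'' : (⌊x⌋:ℝ) ≤ (z:ℝ) := by exact_mod_cast hz2'
    have hceil := Int.ceil_lt_add_one x
    have hfloor := Int.sub_one_lt_floor x
    rw [abs_le]
    constructor <;> linarith

/-! ### Convex hull helpers -/

lemma convZ_mono {A B : Set (Fin n → ℤ)} (h : A ⊆ B) : convZ A ⊆ convZ B :=
  convexHull_mono (Set.image_mono h)

lemma convZ_halfspace {A : Set (Fin n → ℤ)} {a : Fin n → ℝ} {c : ℝ}
    (h : ∀ z ∈ A, a ⬝ᵥ coeZ z ≤ c) {x : Fin n → ℝ} (hx : x ∈ convZ A) :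
    a ⬝ᵥ x ≤ c := by
  have hsub : convZ A ⊆ {y | a ⬝ᵥ y ≤ c} := by
    apply convexHull_min
    · rintro y ⟨z, hz, rfl⟩; exact h z hz
    · exact convex_halfSpace_le (isLinearMap_dot a) c
  exact hsub hx

/-- Extract a finite positive-weight representation from membership in `convZ`. -/
lemma mem_convZ_rep {A : Set (Fin n → ℤ)} {x : Fin n → ℝ} (hx : x ∈ convZ A) :
    ∃ F : Finset (Fin n → ℤ), (↑F : Set (Fin n → ℤ)) ⊆ A ∧ ∃ μ : (Fin n → ℤ) → ℝ,
      (∀ ζ ∈ F, 0 < μ ζ) ∧ ∑ ζ ∈ F, μ ζ = 1 ∧ ∑ ζ ∈ F, μ ζ • coeZ ζ = x := by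
  classical
  rw [convZ, _root_.convexHull_eq] at hx
  obtain ⟨ι, t, w, z, hw0, hw1, hz, hx⟩ := hx
  have hzero : ∀ i ∈ t, w i = 0 ∨ 0 < w i := fun i hi => (hw0 i hi).eq_or_lt.imp Eq.symm id
  set t' := t.filter (fun i => 0 < w i) with ht'
  have hsub : t' ⊆ t := Finset.filter_subset _ _
  have hw1' : ∑ i ∈ t', w i = 1 := by
    rw [← hw1]
    apply Finset.sum_filter_of_ne
    intro i hi hne
    rcases hzero i hi with h0 | h0
    · exact absurd h0 hne
    · exact h0
  have hxsum : ∑ i ∈ t', w i • z i = x := by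
    rw [← hx, Finset.centerMass_eq_of_sum_1 _ _ hw1]
    apply Finset.sum_filter_of_ne
    intro i hi hne
    rcases hzero i hi with h0 | h0
    · exact absurd (by rw [h0, zero_smul]) hne
    · exact h0
  set g : ι → (Fin n → ℤ) := fun i => fun j => ⌊z i j⌋ with hg
  have hgz : ∀ i ∈ t', z i = coeZ (g i) := by
    intro i hi
    obtain ⟨ζ, hζ, hzi⟩ := hz i (hsub hi)
    rw [← hzi]
    funext j
    simp [hg, coeZ, ← hzi, Int.floor_intCast]
  have hgA : ∀ i ∈ t', g i ∈ A := by
    intro i hi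
    obtain ⟨ζ, hζ, hzi⟩ := hz i (hsub hi)
    have : g i = ζ := by
      funext j
      simp [hg, ← hzi, coeZ, Int.floor_intCast]
    rwa [this]
  refine ⟨t'.image g, ?_, fun ζ => ∑ i ∈ t'.filter (fun i => g i = ζ), w i, ?_, ?_, ?_⟩
  · intro ζ hζ
    obtain ⟨i, hi, rfl⟩ := Finset.mem_image.1 (by exact_mod_cast hζ)
    exact hgA i hi
  · intro ζ hζ
    obtain ⟨i, hi, rfl⟩ := Finset.mem_image.1 hζ
    apply Finset.sum_pos
    · intro j hj
      exact (Finset.mem_filter.1 (Finset.mem_filter.1 hj).1).2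
    · exact ⟨i, Finset.mem_filter.2 ⟨hi, rfl⟩⟩
  · rw [Finset.sum_fiberwise_of_maps_to (fun i hi => Finset.mem_image_of_mem g hi) w]
    exact hw1'
  · rw [← hxsum, ← Finset.sum_fiberwise_of_maps_to
      (fun i hi => Finset.mem_image_of_mem g hi) (fun i => w i • z i)]
    apply Finset.sum_congr rfl
    intro ζ hζ
    rw [Finset.sum_smul]
    apply Finset.sum_congr rfl
    intro i hi
    obtain ⟨hit', hgi⟩ := Finset.mem_filter.1 hi
    rw [hgz i hit', hgi]

/-! ### Integral neighborhoods of integer points -/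

lemma mem_of_coeZ_mem_convZ {S : Set (Fin n → ℤ)} (hS : IntegrallyConvex S)
    {z : Fin n → ℤ} (hz : coeZ z ∈ convZ S) : z ∈ S := by
  have h2 := hS.2 _ hz
  by_contra hzS
  have hempty : S ∩ intNbhd (coeZ z) = ∅ := by
    ext z'
    simp only [Set.mem_inter_iff, Set.mem_empty_iff_false, iff_false, not_and]
    intro hz' hn
    apply hzS
    have hzz : z' = z := by
      funext i
      have hi := hn i
      have hi' : |(z i : ℝ) - (z' i : ℝ)| < 1 := by simpa [coeZ] using hi
      have hi'' : |z i - z' i| < 1 := by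
        have : |((z i - z' i : ℤ) : ℝ)| < 1 := by push_cast; exact hi'
        exact_mod_cast this
      have := Int.abs_lt_one_iff.1 hi''
      omega
    rwa [hzz] at hz'
  rw [hempty] at h2
  simp [convZ, Set.image_empty, convexHull_empty] at h2

/-! ### Boxes -/

def IccZ (l u : Fin n → ℤ) : Set (Fin n → ℤ) := {z | ∀ i, l i ≤ z i ∧ z i ≤ u i}

lemma finite_IccZ (l u : Fin n → ℤ) : (IccZ l u).Finite := by
  apply Set.Finite.subset (Set.Finite.pi (fun i => Set.finite_Icc (l i) (u i)))
  intro z hz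
  simp only [Set.mem_pi, Set.mem_univ, forall_true_left, Set.mem_Icc]
  intro i
  exact ⟨(hz i).1, (hz i).2⟩

lemma convex_intBox (l u : Fin n → ℤ) : Convex ℝ (intBox l u) := by
  intro x hx y hy α β hα hβ hαβ
  intro i
  have hxi := hx i
  have hyi := hy i
  have hcoord : (α • x + β • y) i = α * x i + β * y i := by
    simp [Pi.add_apply, Pi.smul_apply, smul_eq_mul]
  rw [intBox] at *
  constructor
  · have h1 : α * (l i : ℝ) ≤ α * x i := mul_le_mul_of_nonneg_left hxi.1 hα
    have h2 : β * (l i : ℝ) ≤ β * y i := mul_le_mul_of_nonneg_left hyi.1 hβ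
    have h3 : α * (l i : ℝ) + β * (l i : ℝ) = (l i : ℝ) := by
      rw [← add_mul, hαβ, one_mul]
    rw [hcoord]; linarith
  · have h1 : α * x i ≤ α * (u i : ℝ) := mul_le_mul_of_nonneg_left hxi.2 hα
    have h2 : β * y i ≤ β * (u i : ℝ) := mul_le_mul_of_nonneg_left hyi.2 hβ
    have h3 : α * (u i : ℝ) + β * (u i : ℝ) = (u i : ℝ) := by
      rw [← add_mul, hαβ, one_mul]
    rw [hcoord]; linarith

lemma coeZ_mem_intBox {l u : Fin n → ℤ} {z : Fin n → ℤ} (hz : z ∈ IccZ l u) :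
    coeZ z ∈ intBox l u := by
  intro i
  constructor
  · show (↑(l i) : ℝ) ≤ ((z i : ℤ) : ℝ)
    exact_mod_cast (hz i).1
  · show ((z i : ℤ) : ℝ) ≤ (↑(u i) : ℝ)
    exact_mod_cast (hz i).2

lemma convZ_IccZ_subset_intBox {S : Set (Fin n → ℤ)} (l u : Fin n → ℤ) :
    convZ (S ∩ IccZ l u) ⊆ intBox l u := by
  apply convexHull_min
  · rintro y ⟨ζ, hζ, rfl⟩
    exact coeZ_mem_intBox hζ.2
  · exact convex_intBox l u

lemma cell_lemma {S : Set (Fin n → ℤ)} (hS : IntegrallyConvex S) (l u : Fin n → ℤ) :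
    convZ S ∩ intBox l u = convZ (S ∩ IccZ l u) := by
  apply Set.Subset.antisymm
  · rintro x ⟨hxc, hxb⟩
    have hx2 := hS.2 x hxc
    apply convZ_mono _ hx2
    rintro z ⟨hzS, hzN⟩
    refine ⟨hzS, fun i => ?_⟩
    have hb := hxb i
    have hni := abs_lt.1 (hzN i)
    constructor
    · have hlr : (l i : ℝ) - 1 < (z i : ℝ) := by linarith
      have : l i - 1 < z i := by exact_mod_cast hlr
      omega
    · have hur : (z i : ℝ) < (u i : ℝ) + 1 := by linarith
      have : z i < u i + 1 := by exact_mod_cast hur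
      omega
  · intro x hx
    exact ⟨convZ_mono Set.inter_subset_left hx, convZ_IccZ_subset_intBox l u hx⟩

end IcAux
namespace IcAux

open Matrix Finset

variable {n : ℕ}

/-- Local optimality near a hull point implies global optimality, for integrally
convex sets. -/
lemma local_to_global {S : Set (Fin n → ℤ)} (hS : IntegrallyConvex S)
    {xs : Fin n → ℝ} (hxs : xs ∈ convZ S) (a : Fin n → ℝ)
    (hloc : ∀ z ∈ S, (∀ i, |(z i : ℝ) - xs i| ≤ 1) → a ⬝ᵥ coeZ z ≤ a ⬝ᵥ xs) :
    ∀ y ∈ S, a ⬝ᵥ coeZ y ≤ a ⬝ᵥ xs := by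
  classical
  intro y hy
  set M : ℝ := ∑ i, |coeZ y i - xs i| with hM
  have hM0 : 0 ≤ M := Finset.sum_nonneg fun i _ => abs_nonneg _
  have hMi : ∀ i, |coeZ y i - xs i| ≤ M := fun i =>
    Finset.single_le_sum (fun j _ => abs_nonneg (coeZ y j - xs j)) (Finset.mem_univ i)
  set g : ℝ := if hne : (Finset.univ : Finset (Fin n)).Nonempty
    then Finset.univ.inf' hne (fun i => gapR (xs i)) else 1 with hgdef
  have hg0 : 0 < g := by
    rw [hgdef]
    split_ifs with hne
    · rw [Finset.lt_inf'_iff]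
      exact fun i _ => gapR_pos (xs i)
    · norm_num
  have hgle : ∀ i, g ≤ gapR (xs i) := by
    intro i
    rw [hgdef]
    split_ifs with hne
    · exact Finset.inf'_le _ (Finset.mem_univ i)
    · exact absurd ⟨i, Finset.mem_univ i⟩ hne
  set t : ℝ := (1/2) * min 1 (g / (1 + M)) with htdef
  have ht0 : 0 < t := by
    apply mul_pos (by norm_num)
    exact lt_min one_pos (div_pos hg0 (by linarith))
  have ht1 : t ≤ 1 := by
    have h := min_le_left 1 (g / (1 + M))
    rw [htdef]; linarith
  have htM : ∀ i, t * |coeZ y i - xs i| < gapR (xs i) := by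
    intro i
    have h1 : t ≤ (1/2) * (g / (1 + M)) :=
      mul_le_mul_of_nonneg_left (min_le_right _ _) (by norm_num)
    have h2 : (g / (1 + M)) * |coeZ y i - xs i| ≤ g := by
      rw [div_mul_eq_mul_div, div_le_iff₀ (by linarith : (0:ℝ) < 1 + M)]
      have h2a := hMi i
      nlinarith
    have h3 : 0 ≤ |coeZ y i - xs i| := abs_nonneg _
    have h4 : t * |coeZ y i - xs i| ≤ ((1/2) * (g / (1 + M))) * |coeZ y i - xs i| :=
      mul_le_mul_of_nonneg_right h1 h3
    have h5 : ((1/2) * (g / (1 + M))) * |coeZ y i - xs i|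
        = (1/2) * ((g / (1 + M)) * |coeZ y i - xs i|) := by ring
    have h6 := hgle i
    linarith
  set w : Fin n → ℝ := (1 - t) • xs + t • coeZ y with hwdef
  have hw : w ∈ convZ S := by
    have hyc : coeZ y ∈ convZ S := subset_convexHull ℝ _ ⟨y, hy, rfl⟩
    exact (convex_convexHull ℝ _) hxs hyc (by linarith) ht0.le (by ring)
  have hwx : ∀ i, w i - xs i = t * (coeZ y i - xs i) := by
    intro i
    simp only [hwdef, Pi.add_apply, Pi.smul_apply, smul_eq_mul]
    ring
  have h2 := hS.2 w hw
  have hkey : ∀ ζ ∈ S ∩ intNbhd w, a ⬝ᵥ coeZ ζ ≤ a ⬝ᵥ xs := by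
    rintro ζ ⟨hζS, hζN⟩
    apply hloc ζ hζS
    intro i
    have hNi := hζN i
    have habs : |(ζ i : ℝ) - xs i| < 1 + gapR (xs i) := by
      have h4 : |(ζ i:ℝ) - xs i| ≤ |(ζ i:ℝ) - w i| + |w i - xs i| := abs_sub_le _ _ _
      have h5 : |(ζ i:ℝ) - w i| = |w i - (ζ i:ℝ)| := abs_sub_comm _ _
      have h6 : |w i - xs i| = t * |coeZ y i - xs i| := by
        rw [hwx i, abs_mul, abs_of_pos ht0]
      have h7 := htM i
      linarith
    exact gapR_abs habs
  have hwa : a ⬝ᵥ w ≤ a ⬝ᵥ xs := convZ_halfspace hkey h2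
  have hexp : a ⬝ᵥ w = (1 - t) * (a ⬝ᵥ xs) + t * (a ⬝ᵥ coeZ y) := by
    rw [hwdef, dotProduct_add, dotProduct_smul, dotProduct_smul, smul_eq_mul, smul_eq_mul]
  have hfin : t * (a ⬝ᵥ coeZ y) ≤ t * (a ⬝ᵥ xs) := by linarith
  exact le_of_mul_le_mul_left hfin ht0

end IcAux
namespace IcAux

open Matrix Finset

variable {n : ℕ}

/-- All vectors with integer entries in `[-2,2]`, as a finite set of real vectors. -/
noncomputable def bigD (n : ℕ) : Finset (Fin n → ℝ) :=
  (Finset.univ : Finset (Fin n → Fin 5)).image (fun f => fun i => ((f i : ℕ) : ℝ) - 2)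

lemma mem_bigD {δ : Fin n → ℤ} (hδ : ∀ i, |δ i| ≤ 2) :
    (fun i => (δ i : ℝ)) ∈ bigD n := by
  classical
  rw [bigD]
  rw [Finset.mem_image]
  refine ⟨fun i => ⟨(δ i + 2).toNat, by have := hδ i; rw [abs_le] at this; omega⟩,
    Finset.mem_univ _, ?_⟩
  funext i
  have hnn : (0:ℤ) ≤ δ i + 2 := by have := hδ i; rw [abs_le] at this; omega
  have h1 : ((δ i + 2).toNat : ℤ) = δ i + 2 := Int.toNat_of_nonneg hnn
  have h2 : (((δ i + 2).toNat : ℕ) : ℝ) = (δ i : ℝ) + 2 := by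
    exact_mod_cast congrArg (fun m : ℤ => (m : ℝ)) h1
  simp only [h2]
  ring

noncomputable def weylSet (D : Finset (Fin n → ℝ)) : Finset (Fin n → ℝ) :=
  Classical.choose (weyl_exists D)

lemma weylSet_spec (D : Finset (Fin n → ℝ)) :
    ∀ v, coneComb D v ↔ ∀ a ∈ weylSet D, a ⬝ᵥ v ≤ 0 :=
  Classical.choose_spec (weyl_exists D)

/-- The finite universal set of normal vectors. -/
noncomputable def AA (n : ℕ) : Finset (Fin n → ℝ) :=
  (bigD n).powerset.biUnion (fun D => weylSet D)

lemma weylSet_subset_AA {D : Finset (Fin n → ℝ)} (hD : D ⊆ bigD n) :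
    weylSet D ⊆ AA n := by
  intro a ha
  classical
  rw [AA]
  rw [Finset.mem_biUnion]
  exact ⟨D, Finset.mem_powerset.2 hD, ha⟩

end IcAux
namespace IcAux

open Matrix Finset

variable {n : ℕ}

theorem convZ_eq_halfspaces {S : Set (Fin n → ℤ)} (hS : IntegrallyConvex S) :
    convZ S = {x | ∀ a ∈ AA n, BddAbove ((fun z => a ⬝ᵥ coeZ z) '' S) →
      a ⬝ᵥ x ≤ sSup ((fun z => a ⬝ᵥ coeZ z) '' S)} := by
  classical
  apply Set.Subset.antisymm
  · intro x hx a _ hbdd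
    exact convZ_halfspace (fun z hz => le_csSup hbdd ⟨z, hz, rfl⟩) hx
  · intro x hxQ
    obtain ⟨y0, hy0⟩ := hS.1
    set p : ℝ → (Fin n → ℝ) := fun t => coeZ y0 + t • (x - coeZ y0) with hpdef
    set l : Fin n → ℤ := fun i => ⌊min (coeZ y0 i) (x i)⌋ with hldef
    set uu : Fin n → ℤ := fun i => ⌈max (coeZ y0 i) (x i)⌉ with huudef
    have hpbox : ∀ t : ℝ, t ∈ Set.Icc (0:ℝ) 1 → p t ∈ intBox l uu := by
      intro t ht i
      have hco : p t i = (1 - t) * coeZ y0 i + t * x i := by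
        simp only [hpdef, Pi.add_apply, Pi.smul_apply, Pi.sub_apply, smul_eq_mul]
        ring
      have hmin1 : min (coeZ y0 i) (x i) ≤ coeZ y0 i := min_le_left _ _
      have hmin2 : min (coeZ y0 i) (x i) ≤ x i := min_le_right _ _
      have hmax1 : coeZ y0 i ≤ max (coeZ y0 i) (x i) := le_max_left _ _
      have hmax2 : x i ≤ max (coeZ y0 i) (x i) := le_max_right _ _
      have hfl : (l i : ℝ) ≤ min (coeZ y0 i) (x i) := Int.floor_le _
      have hcl : max (coeZ y0 i) (x i) ≤ (uu i : ℝ) := Int.le_ceil _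
      constructor
      · rw [hco]; nlinarith [ht.1, ht.2]
      · rw [hco]; nlinarith [ht.1, ht.2]
    have hKclosed : IsClosed (convZ (S ∩ IccZ l uu)) := by
      apply Set.Finite.isClosed_convexHull
      exact (Set.Finite.subset (finite_IccZ l uu) Set.inter_subset_right).image _
    have hcell := cell_lemma hS l uu
    set Abox : Set ℝ := {t | t ∈ Set.Icc (0:ℝ) 1 ∧ p t ∈ convZ S} with hAbox
    have hAbox_eq : Abox = Set.Icc (0:ℝ) 1 ∩ p ⁻¹' (convZ (S ∩ IccZ l uu)) := by
      ext t
      simp only [hAbox, Set.mem_setOf_eq, Set.mem_inter_iff, Set.mem_preimage]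
      constructor
      · rintro ⟨ht, hc⟩
        refine ⟨ht, ?_⟩
        rw [← hcell]
        exact ⟨hc, hpbox t ht⟩
      · rintro ⟨ht, hc⟩
        exact ⟨ht, convZ_mono Set.inter_subset_left hc⟩
    have hpcont : Continuous p := by
      apply Continuous.add continuous_const
      exact continuous_id.smul continuous_const
    have hclosed : IsClosed Abox := by
      rw [hAbox_eq]
      exact isClosed_Icc.inter (hKclosed.preimage hpcont)
    have h0A : (0:ℝ) ∈ Abox := by
      refine ⟨⟨le_refl 0, zero_le_one⟩, ?_⟩
      have hp0 : p 0 = coeZ y0 := by simp [hpdef]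
      rw [hp0]
      exact subset_convexHull ℝ _ ⟨y0, hy0, rfl⟩
    have hbddA : BddAbove Abox := ⟨1, fun t ht => ht.1.2⟩
    set tstar := sSup Abox with htstar
    have htA : tstar ∈ Abox := hclosed.csSup_mem ⟨0, h0A⟩ hbddA
    by_cases hT : tstar = 1
    · have hp1 : p 1 = x := by simp [hpdef]
      rw [← hp1]
      have hmem := htA.2
      rwa [hT] at hmem
    · exfalso
      have ht1 : tstar < 1 := lt_of_le_of_ne htA.1.2 hT
      set xs := p tstar with hxsdef
      have hxsc : xs ∈ convZ S := htA.2
      set u : Fin n → ℝ := x - coeZ y0 with hudef2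
      have hps : ∀ s : ℝ, p (tstar + s) = xs + s • u := by
        intro s
        funext i
        simp only [hpdef, hxsdef, hudef2, Pi.add_apply, Pi.smul_apply, Pi.sub_apply,
          smul_eq_mul]
        ring
      have hout : ∀ s : ℝ, 0 < s → s ≤ 1 - tstar → xs + s • u ∉ convZ S := by
        intro s hs hs1 hmem
        have hsA : tstar + s ∈ Abox := by
          refine ⟨⟨by linarith [htA.1.1], by linarith⟩, ?_⟩
          rw [hps s]; exact hmem
        have := le_csSup hbddA hsA
        linarith
      set Wset : Set (Fin n → ℤ) := S ∩ {z | ∀ i, |(z i : ℝ) - xs i| ≤ 1} with hWset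
      have hWfin : Wset.Finite := by
        apply Set.Finite.subset (finite_IccZ (fun i => ⌈xs i⌉ - 1) (fun i => ⌊xs i⌋ + 1))
        rintro z ⟨_, hz⟩ i
        have hzi := abs_le.1 (hz i)
        constructor
        · have h1 : xs i - 1 ≤ (z i : ℝ) := by linarith [hzi.1]
          have h2 : ⌈xs i - 1⌉ ≤ z i := Int.ceil_le.2 h1
          rwa [Int.ceil_sub_one] at h2
        · have h1 : (z i : ℝ) ≤ xs i + 1 := by linarith [hzi.2]
          have h2 : z i ≤ ⌊xs i + 1⌋ := Int.le_floor.2 h1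
          rwa [Int.floor_add_one] at h2
      set Wf := hWfin.toFinset with hWf
      have hWfS : ∀ z ∈ Wf, z ∈ S := fun z hz => ((hWfin.mem_toFinset).1 hz).1
      have hWfabs : ∀ z ∈ Wf, ∀ i, |(z i:ℝ) - xs i| ≤ 1 :=
        fun z hz => ((hWfin.mem_toFinset).1 hz).2
      have hWmem : ∀ z : Fin n → ℤ, z ∈ S → (∀ i, |(z i:ℝ) - xs i| ≤ 1) → z ∈ Wf :=
        fun z h1 h2 => hWfin.mem_toFinset.2 ⟨h1, h2⟩
      obtain ⟨Ff, hFsub, μ, hμpos, hμ1, hμx⟩ := mem_convZ_rep (hS.2 xs hxsc)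
      have hFfW : ∀ ζ ∈ Ff, ζ ∈ Wf := by
        intro ζ hζ
        obtain ⟨hζS, hζN⟩ := hFsub (Finset.mem_coe.2 hζ)
        apply hWmem ζ hζS
        intro i
        have := hζN i
        rw [abs_sub_comm] at this
        exact this.le
      have hFne : Ff.Nonempty := by
        rcases Finset.eq_empty_or_nonempty Ff with h | h
        · rw [h, Finset.sum_empty] at hμ1; norm_num at hμ1
        · exact h
      set D : Finset (Fin n → ℝ) := (Wf ×ˢ Ff).image (fun q => coeZ q.1 - coeZ q.2)
        with hDdef
      have hDsub : D ⊆ bigD n := by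
        intro v hv
        obtain ⟨qq, hqq, rfl⟩ := Finset.mem_image.1 hv
        obtain ⟨hq1, hq2⟩ := Finset.mem_product.1 hqq
        have habs : ∀ i, |qq.1 i - qq.2 i| ≤ 2 := by
          intro i
          have h1 := hWfabs _ hq1 i
          have h2 := hWfabs _ (hFfW _ hq2) i
          have h3 : |(qq.1 i : ℝ) - (qq.2 i : ℝ)| ≤ 2 := by
            have h4 := abs_sub_le ((qq.1 i : ℝ)) (xs i) ((qq.2 i : ℝ))
            have h5 : |xs i - (qq.2 i:ℝ)| = |(qq.2 i:ℝ) - xs i| := abs_sub_comm _ _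
            linarith
          have h6 : |((qq.1 i - qq.2 i : ℤ) : ℝ)| ≤ 2 := by push_cast; exact h3
          exact_mod_cast h6
        have hfun : coeZ qq.1 - coeZ qq.2 = fun i => ((qq.1 i - qq.2 i : ℤ) : ℝ) := by
          funext i
          simp [coeZ]
        rw [hfun]
        exact mem_bigD habs
      have hucone : ¬ coneComb D u := by
        rintro ⟨c, hc, hu⟩
        have hpair : ∀ d ∈ D, ∃ qq : (Fin n → ℤ) × (Fin n → ℤ),
            (qq.1 ∈ Wf ∧ qq.2 ∈ Ff) ∧ coeZ qq.1 - coeZ qq.2 = d := by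
          intro d hd
          obtain ⟨qq, hqq, hdq⟩ := Finset.mem_image.1 hd
          exact ⟨qq, ⟨(Finset.mem_product.1 hqq).1, (Finset.mem_product.1 hqq).2⟩, hdq⟩
        choose! q hqmem hqeq using hpair
        set T : ℝ := ∑ d ∈ D, c d with hT
        have hT0 : 0 ≤ T := Finset.sum_nonneg fun d _ => hc d
        set μmin : ℝ := Ff.inf' hFne μ with hμmin
        have hμmin0 : 0 < μmin := by
          rw [hμmin, Finset.lt_inf'_iff]
          exact hμpos
        have hμminle : ∀ ζ ∈ Ff, μmin ≤ μ ζ := fun ζ hζ => Finset.inf'_le _ hζ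
        set s : ℝ := min (μmin / (T + 1)) (1 - tstar) with hsdef
        have hs0 : 0 < s := lt_min (div_pos hμmin0 (by linarith)) (by linarith)
        have hsT : s * T ≤ μmin := by
          have h1 : s ≤ μmin / (T + 1) := min_le_left _ _
          have h2 : (μmin / (T + 1)) * T ≤ μmin := by
            rw [div_mul_eq_mul_div, div_le_iff₀ (by linarith : (0:ℝ) < T + 1)]
            nlinarith
          have h3 : s * T ≤ (μmin / (T + 1)) * T := mul_le_mul_of_nonneg_right h1 hT0
          linarith
        set ν : (Fin n → ℤ) → ℝ := fun ζ => (if ζ ∈ Ff then μ ζ else 0)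
            + s * (∑ d ∈ D, c d * (if (q d).1 = ζ then 1 else 0))
            - s * (∑ d ∈ D, c d * (if (q d).2 = ζ then 1 else 0)) with hν
        have hWfFf : Wf ∩ Ff = Ff := Finset.inter_eq_right.2 (fun ζ hζ => hFfW ζ hζ)
        have hsum_base : ∑ ζ ∈ Wf, (if ζ ∈ Ff then μ ζ else 0) = 1 := by
          rw [Finset.sum_ite_mem, hWfFf, hμ1]
        have hsum_in : ∀ (sel : (Fin n → ℝ) → (Fin n → ℤ)), (∀ d ∈ D, sel d ∈ Wf) →
            ∑ ζ ∈ Wf, ∑ d ∈ D, c d * (if sel d = ζ then 1 else 0) = T := by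
          intro sel hsel
          rw [Finset.sum_comm]
          refine Finset.sum_congr rfl fun d hd => ?_
          rw [← Finset.mul_sum, Finset.sum_ite_eq, if_pos (hsel d hd), mul_one]
        have hsum1 : ∑ ζ ∈ Wf, ν ζ = 1 := by
          simp only [hν]
          rw [Finset.sum_sub_distrib, Finset.sum_add_distrib, hsum_base,
            ← Finset.mul_sum, ← Finset.mul_sum,
            hsum_in (fun d => (q d).1) (fun d hd => (hqmem d hd).1),
            hsum_in (fun d => (q d).2) (fun d hd => hFfW _ (hqmem d hd).2)]
          ring
        have hterm : ∀ ζ, ν ζ • coeZ ζ = (if ζ ∈ Ff then μ ζ • coeZ ζ else 0)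
            + (∑ d ∈ D, (if (q d).1 = ζ then (s * c d) • coeZ ζ else 0))
            - (∑ d ∈ D, (if (q d).2 = ζ then (s * c d) • coeZ ζ else 0)) := by
          intro ζ
          have e1 : (if ζ ∈ Ff then μ ζ else 0) • coeZ ζ
              = (if ζ ∈ Ff then μ ζ • coeZ ζ else 0) := by
            split_ifs <;> simp
          have e2 : ∀ sel : (Fin n → ℝ) → (Fin n → ℤ),
              (s * (∑ d ∈ D, c d * (if sel d = ζ then 1 else 0))) • coeZ ζ
              = ∑ d ∈ D, (if sel d = ζ then (s * c d) • coeZ ζ else 0) := by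
            intro sel
            rw [Finset.mul_sum, Finset.sum_smul]
            refine Finset.sum_congr rfl fun d hd => ?_
            split_ifs with hh
            · rw [mul_one]
            · rw [mul_zero, mul_zero, zero_smul]
          simp only [hν]
          rw [sub_smul, add_smul, e1, e2 (fun d => (q d).1), e2 (fun d => (q d).2)]
        have hsum_vec : ∑ ζ ∈ Wf, ν ζ • coeZ ζ = xs + s • u := by
          rw [Finset.sum_congr rfl (fun ζ _ => hterm ζ)]
          rw [Finset.sum_sub_distrib, Finset.sum_add_distrib]
          have hbase : ∑ ζ ∈ Wf, (if ζ ∈ Ff then μ ζ • coeZ ζ else 0) = xs := by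
            rw [Finset.sum_ite_mem, hWfFf]
            exact hμx
          have hin : ∑ ζ ∈ Wf, ∑ d ∈ D, (if (q d).1 = ζ then (s * c d) • coeZ ζ else 0)
              = ∑ d ∈ D, (s * c d) • coeZ (q d).1 := by
            rw [Finset.sum_comm]
            refine Finset.sum_congr rfl fun d hd => ?_
            rw [Finset.sum_ite_eq, if_pos ((hqmem d hd).1)]
          have hout2 : ∑ ζ ∈ Wf, ∑ d ∈ D, (if (q d).2 = ζ then (s * c d) • coeZ ζ else 0)
              = ∑ d ∈ D, (s * c d) • coeZ (q d).2 := by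
            rw [Finset.sum_comm]
            refine Finset.sum_congr rfl fun d hd => ?_
            rw [Finset.sum_ite_eq, if_pos (hFfW _ (hqmem d hd).2)]
          rw [hbase, hin, hout2, add_sub_assoc]
          have hdiff : ∑ d ∈ D, (s * c d) • coeZ (q d).1 - ∑ d ∈ D, (s * c d) • coeZ (q d).2
              = s • ∑ d ∈ D, c d • d := by
            rw [← Finset.sum_sub_distrib, Finset.smul_sum]
            refine Finset.sum_congr rfl fun d hd => ?_
            rw [← smul_sub, hqeq d hd, smul_smul]
          rw [hdiff, ← hu]
        have hν0 : ∀ ζ ∈ Wf, 0 ≤ ν ζ := by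
          intro ζ hζ
          have hinpos : 0 ≤ ∑ d ∈ D, c d * (if (q d).1 = ζ then 1 else 0) :=
            Finset.sum_nonneg fun d _ => mul_nonneg (hc d) (by split_ifs <;> norm_num)
          by_cases hf : ζ ∈ Ff
          · have houtle : ∑ d ∈ D, c d * (if (q d).2 = ζ then 1 else 0) ≤ T := by
              rw [hT]
              apply Finset.sum_le_sum
              intro d hd
              have hle1 : (if (q d).2 = ζ then (1:ℝ) else 0) ≤ 1 := by
                split_ifs <;> norm_num
              nlinarith [hc d]
            have h1 := hμminle ζ hf
            simp only [hν, if_pos hf]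
            have h2 : s * (∑ d ∈ D, c d * (if (q d).2 = ζ then 1 else 0)) ≤ s * T :=
              mul_le_mul_of_nonneg_left houtle hs0.le
            have h3 := mul_nonneg hs0.le hinpos
            linarith
          · have houtzero : ∑ d ∈ D, c d * (if (q d).2 = ζ then 1 else 0) = 0 := by
              apply Finset.sum_eq_zero
              intro d hd
              rw [if_neg, mul_zero]
              intro heq
              exact hf (heq ▸ (hqmem d hd).2)
            simp only [hν, if_neg hf]
            rw [houtzero, mul_zero]
            have h3 := mul_nonneg hs0.le hinpos
            linarith
        have hxsu : xs + s • u ∈ convZ S := by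
          have hmem := Finset.centerMass_mem_convexHull (t := Wf) (w := ν)
            (z := fun ζ => coeZ ζ) (s := coeZ '' S) hν0 (by rw [hsum1]; norm_num)
            (fun ζ hζ => Set.mem_image_of_mem coeZ (hWfS ζ hζ))
          rw [Finset.centerMass_eq_of_sum_1 _ _ hsum1] at hmem
          rw [hsum_vec] at hmem
          exact hmem
        exact hout s hs0 (min_le_right _ _) hxsu
      have hnot : ¬ ∀ a ∈ weylSet D, a ⬝ᵥ u ≤ 0 :=
        fun h => hucone ((weylSet_spec D u).2 h)
      push_neg at hnot
      obtain ⟨a, haW, hau⟩ := hnot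
      have haAA : a ∈ AA n := weylSet_subset_AA hDsub haW
      have hval : ∀ w ∈ Wf, ∀ v ∈ Ff, a ⬝ᵥ coeZ w ≤ a ⬝ᵥ coeZ v := by
        intro w hw v hv
        have hdD : coeZ w - coeZ v ∈ D :=
          Finset.mem_image.2 ⟨(w, v), Finset.mem_product.2 ⟨hw, hv⟩, rfl⟩
        have hle := (weylSet_spec D _).1 (coneComb_mem hdD) a haW
        rw [dotProduct_sub] at hle
        linarith
      obtain ⟨v0, hv0⟩ := hFne
      have hconst : ∀ v ∈ Ff, a ⬝ᵥ coeZ v = a ⬝ᵥ coeZ v0 :=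
        fun v hv => le_antisymm (hval v (hFfW v hv) v0 hv0) (hval v0 (hFfW v0 hv0) v hv)
      have haxs : a ⬝ᵥ xs = a ⬝ᵥ coeZ v0 := by
        rw [← hμx, dot_sum]
        have hcong : ∀ ζ ∈ Ff, a ⬝ᵥ (μ ζ • coeZ ζ) = μ ζ * (a ⬝ᵥ coeZ v0) := by
          intro ζ hζ
          rw [dotProduct_smul, smul_eq_mul, hconst ζ hζ]
        rw [Finset.sum_congr rfl hcong, ← Finset.sum_mul, hμ1, one_mul]
      have hWle : ∀ z ∈ S, (∀ i, |(z i:ℝ) - xs i| ≤ 1) → a ⬝ᵥ coeZ z ≤ a ⬝ᵥ xs := by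
        intro z h1 h2
        rw [haxs]
        exact hval z (hWmem z h1 h2) v0 hv0
      have hglob := local_to_global hS hxsc a hWle
      have hbdd : BddAbove ((fun z => a ⬝ᵥ coeZ z) '' S) := by
        refine ⟨a ⬝ᵥ xs, ?_⟩
        rintro r ⟨z, hz, rfl⟩
        exact hglob z hz
      have hsup := hxQ a haAA hbdd
      have hsup2 : sSup ((fun z => a ⬝ᵥ coeZ z) '' S) ≤ a ⬝ᵥ xs := by
        have hne2 : ((fun z => a ⬝ᵥ coeZ z) '' S).Nonempty :=
          ⟨a ⬝ᵥ coeZ y0, y0, hy0, rfl⟩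
        apply csSup_le hne2
        rintro r ⟨z, hz, rfl⟩
        exact hglob z hz
      have hx_eq : x = xs + (1 - tstar) • u := by
        have hps1 := hps (1 - tstar)
        have h1 : tstar + (1 - tstar) = 1 := by ring
        rw [h1] at hps1
        rw [← hps1]
        simp [hpdef, hudef2]
      have hax : a ⬝ᵥ x = a ⬝ᵥ xs + (1 - tstar) * (a ⬝ᵥ u) := by
        rw [hx_eq, dotProduct_add, dotProduct_smul, smul_eq_mul]
      nlinarith [mul_pos (by linarith : (0:ℝ) < 1 - tstar) hau]

end IcAux
open Matrix in
/-- If `S ⊆ ℤ^n` is integrally convex, then `conv(S)` is a box-integer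
polyhedron and `S = conv(S) ∩ ℤ^n`. -/
theorem integrallyConvex_hull_boxInteger {n : ℕ} (S : Set (Fin n → ℤ))
    (hS : IntegrallyConvex S) :
    IsPolyhedron (convZ S) ∧ IsBoxInteger (convZ S) ∧
    S = {z : Fin n → ℤ | coeZ z ∈ convZ S} := by
  classical
  obtain ⟨y0, hy0⟩ := hS.1
  have hne : (convZ S).Nonempty := ⟨coeZ y0, subset_convexHull ℝ _ ⟨y0, hy0, rfl⟩⟩
  have hSeq : S = {z : Fin n → ℤ | coeZ z ∈ convZ S} := by
    ext z
    constructor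
    · intro hz
      exact subset_convexHull ℝ _ ⟨z, hz, rfl⟩
    · intro hz
      exact IcAux.mem_of_coeZ_mem_convZ hS hz
  refine ⟨⟨hne, ?_⟩, ?_, hSeq⟩
  · -- polyhedron
    have hQ := IcAux.convZ_eq_halfspaces hS
    set F := IcAux.AA n with hF
    set row : F → (Fin n → ℝ) := fun a =>
      if BddAbove ((fun z => (a : Fin n → ℝ) ⬝ᵥ coeZ z) '' S) then (a : Fin n → ℝ)
      else 0 with hrow
    set bnd : F → ℝ := fun a =>
      if BddAbove ((fun z => (a : Fin n → ℝ) ⬝ᵥ coeZ z) '' S)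
      then sSup ((fun z => (a : Fin n → ℝ) ⬝ᵥ coeZ z) '' S) else 0 with hbnd
    refine ⟨F.card, fun k j => row (F.equivFin.symm k) j,
      fun k => bnd (F.equivFin.symm k), ?_⟩
    rw [hQ]
    ext x
    simp only [Set.mem_setOf_eq]
    constructor
    · intro hx
      rw [Pi.le_def]
      intro k
      show (fun j => row (F.equivFin.symm k) j) ⬝ᵥ x ≤ bnd (F.equivFin.symm k)
      by_cases hb : BddAbove
          ((fun z => ((F.equivFin.symm k : F) : Fin n → ℝ) ⬝ᵥ coeZ z) '' S)
      · simp only [hrow, hbnd, if_pos hb]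
        exact hx _ (F.equivFin.symm k).2 hb
      · simp only [hrow, hbnd, if_neg hb]
        show (0 : Fin n → ℝ) ⬝ᵥ x ≤ 0
        rw [zero_dotProduct]
    · intro hx a haF hb
      rw [Pi.le_def] at hx
      have hk : (fun j => row (F.equivFin.symm (F.equivFin ⟨a, haF⟩)) j) ⬝ᵥ x
          ≤ bnd (F.equivFin.symm (F.equivFin ⟨a, haF⟩)) := hx (F.equivFin ⟨a, haF⟩)
      rw [Equiv.symm_apply_apply] at hk
      simp only [hrow, hbnd, if_pos hb] at hk
      exact hk
  · -- box-integer
    intro l u hlu hne2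
    have hcell := IcAux.cell_lemma hS l u
    rw [hcell]
    have hint : intPts (convZ (S ∩ IcAux.IccZ l u)) = coeZ '' (S ∩ IcAux.IccZ l u) := by
      ext x
      constructor
      · rintro ⟨hx1, hx2⟩
        have hbox := IcAux.convZ_IccZ_subset_intBox l u hx1
        have hxz : coeZ (fun i => ⌊x i⌋) = x := by
          funext i
          obtain ⟨m, hm⟩ := hx2 i
          simp [coeZ, hm, Int.floor_intCast]
        refine ⟨fun i => ⌊x i⌋, ⟨?_, ?_⟩, hxz⟩
        · apply IcAux.mem_of_coeZ_mem_convZ hS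
          rw [hxz]
          exact IcAux.convZ_mono Set.inter_subset_left hx1
        · intro i
          have hb := hbox i
          have hxi : ((⌊x i⌋ : ℤ) : ℝ) = x i := congrFun hxz i
          constructor
          · have h1 := hb.1
            rw [← hxi] at h1
            exact_mod_cast h1
          · have h2 := hb.2
            rw [← hxi] at h2
            exact_mod_cast h2
      · rintro ⟨ζ, hζmem, rfl⟩
        exact ⟨subset_convexHull ℝ _ ⟨ζ, hζmem, rfl⟩, fun i => ⟨ζ i, rfl⟩⟩
    rw [hint]
    rfl
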